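/- The optimality reduction for star queries: fix m ≥ 2 and constants ε ∈ [0,1], ε' > 0 with ε' < ε, and set α = mε − ε'. If an algorithm enumerates the star query Q*_m on any database D with preprocessing time C·|D|^{1+(m−1)ε−ε'} and delay C·|D|^{1−ε}·log|D|, then on any database D' with output size |Q*_m(D')| = |D'|^α / log|D'|, the total time to enumerate all results is O(|D'|^{1−ε'/m} · |Q*_m(D')|^{1−1/m}). -/

import Mathlib

/-- Optimality reduction for star queries: the exponent arithmetic showing both the
preprocessing term and the delay term are bounded by the target exponent, and the
resulting total-time bound `O(|D'|^(1-ε'/m) · |Q(D')|^(1-1/m))` with output size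
`|D'|^(mε-ε')/log|D'|`. -/
theorem star_optimality_reduction (m ε ε' : ℝ) (hm : 2 ≤ m)
    (hε0 : 0 ≤ ε) (hε1 : ε ≤ 1) (hε'0 : 0 < ε') (hε' : ε' < ε) :
    (1 + (m - 1) * ε - ε' ≤ (1 - ε' / m) + (m * ε - ε') * (1 - 1 / m)) ∧
    (1 - ε + m * ε - ε' ≤ (1 - ε' / m) + (m * ε - ε') * (1 - 1 / m)) ∧
    (∀ C x : ℝ, 0 ≤ C → Real.exp 1 ≤ x →
      C * x ^ (1 + (m - 1) * ε - ε') +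
        C * x ^ (1 - ε) * Real.log x * (x ^ (m * ε - ε') / Real.log x) ≤
      2 * C * (x ^ (1 - ε' / m) * (x ^ (m * ε - ε')) ^ (1 - 1 / m))) := by
  have hm0 : (m : ℝ) ≠ 0 := by linarith
  have heq : (1 - ε' / m) + (m * ε - ε') * (1 - 1 / m) = 1 + (m - 1) * ε - ε' := by
    field_simp
    ring
  refine ⟨le_of_eq heq.symm, ?_, ?_⟩
  · have : 1 - ε + m * ε - ε' = 1 + (m - 1) * ε - ε' := by ring
    rw [this]
    exact le_of_eq heq.symm
  · intro C x hC hx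
    have hx0 : (0 : ℝ) < x := lt_of_lt_of_le (Real.exp_pos 1) hx
    have hlog : 1 ≤ Real.log x := by
      rw [Real.le_log_iff_exp_le hx0]
      simpa using hx
    have hlog0 : Real.log x ≠ 0 := by linarith
    have h2 : C * x ^ (1 - ε) * Real.log x * (x ^ (m * ε - ε') / Real.log x)
        = C * x ^ (1 + (m - 1) * ε - ε') := by
      have hx' : x ^ (1 - ε) * x ^ (m * ε - ε') = x ^ (1 + (m - 1) * ε - ε') := by
        rw [← Real.rpow_add hx0, show (1 - ε) + (m * ε - ε') = 1 + (m - 1) * ε - ε' from by ring]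
      field_simp
      linear_combination (norm := ring_nf) C * hx'
    have h3 : x ^ (1 - ε' / m) * (x ^ (m * ε - ε')) ^ (1 - 1 / m)
        = x ^ (1 + (m - 1) * ε - ε') := by
      rw [← Real.rpow_mul hx0.le, ← Real.rpow_add hx0, heq]
    rw [h2, h3]
    linarith [Real.rpow_nonneg hx0.le (1 + (m - 1) * ε - ε'), mul_nonneg hC (Real.rpow_nonneg hx0.le (1 + (m - 1) * ε - ε'))]
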